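/- Let n ≥ 1 be an integer, let θ ∈ (0,1], and let S ⊆ {1,…,n} be a set of at most n' 'corrupted' indices. Call an index i ∈ {1,…,n} θ-locally good (with respect to S) if for every integer r ≥ 0, at most a θ-fraction of the indices in {i, i+1, …, min(i+r, n)} lie in S and at most a θ-fraction of the indices in {max(i−r, 1), …, i} lie in S. Then at least n − 2n'/θ indices of {1,…,n} are θ-locally good. -/
import Mathlib

open Finset

lemma cover_right (θ : ℝ) (hθ : 0 < θ) (f : ℕ → ℕ) :
    ∀ B S : Finset ℕ,
      (∀ i ∈ B, i ≤ f i) →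
      (∀ i ∈ B, θ * ((Icc i (f i)).card : ℝ) < ((S ∩ Icc i (f i)).card : ℝ)) →
      θ * B.card ≤ (S.card : ℝ) := by
  intro B
  induction B using Finset.strongInduction with
  | _ B ih =>
    intro S hf hcount
    rcases B.eq_empty_or_nonempty with rfl | hBne
    · simp
    set i := B.min' hBne with hi
    have hiB : i ∈ B := B.min'_mem hBne
    set j := f i with hj
    have hij : i ≤ j := hf i hiB
    set B2 := B.filter (fun x => j < x) with hB2
    have hB2ss : B2 ⊂ B := by
      refine Finset.filter_ssubset.mpr ⟨i, hiB, by simpa using hij⟩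
    set S2 := S.filter (fun x => j < x) with hS2
    have hrec : θ * B2.card ≤ (S2.card : ℝ) := by
      apply ih B2 hB2ss S2
      · intro x hx; exact hf x (Finset.mem_of_mem_filter _ hx)
      · intro x hx
        have hxB := Finset.mem_of_mem_filter _ hx
        have hxj : j < x := (Finset.mem_filter.mp hx).2
        have heq : S2 ∩ Icc x (f x) = S ∩ Icc x (f x) := by
          ext y
          simp only [hS2, Finset.mem_inter, Finset.mem_filter, Finset.mem_Icc]
          constructor
          · rintro ⟨⟨hy, _⟩, h2⟩; exact ⟨hy, h2⟩
          · rintro ⟨hy, h2⟩; exact ⟨⟨hy, lt_of_lt_of_le hxj h2.1⟩, h2⟩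
        rw [heq]; exact hcount x hxB
    have hB1 : B.filter (fun x => ¬ j < x) ⊆ Icc i j := by
      intro x hx
      rw [Finset.mem_filter] at hx
      exact Finset.mem_Icc.mpr ⟨B.min'_le x hx.1, not_lt.mp hx.2⟩
    have h1 : θ * ((B.filter fun x => ¬ j < x).card : ℝ) ≤
        ((S.filter fun x => ¬ j < x).card : ℝ) := by
      calc θ * ((B.filter fun x => ¬ j < x).card : ℝ)
          ≤ θ * ((Icc i j).card : ℝ) := by
            apply mul_le_mul_of_nonneg_left _ hθ.le
            exact_mod_cast Finset.card_le_card hB1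
        _ ≤ ((S ∩ Icc i j).card : ℝ) := (hcount i hiB).le
        _ ≤ ((S.filter fun x => ¬ j < x).card : ℝ) := by
            apply Nat.cast_le.mpr
            apply Finset.card_le_card
            intro y hy
            rw [Finset.mem_inter, Finset.mem_Icc] at hy
            exact Finset.mem_filter.mpr ⟨hy.1, not_lt.mpr hy.2.2⟩
    have hcB : (B2.card : ℝ) + ((B.filter fun x => ¬ j < x).card : ℝ) = B.card := by
      exact_mod_cast Finset.card_filter_add_card_filter_not (s := B) (p := fun x => j < x)
    have hcS : (S2.card : ℝ) + ((S.filter fun x => ¬ j < x).card : ℝ) = S.card := by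
      exact_mod_cast Finset.card_filter_add_card_filter_not (s := S) (p := fun x => j < x)
    nlinarith [hrec, h1]

lemma cover_left (θ : ℝ) (hθ : 0 < θ) (g : ℕ → ℕ) :
    ∀ B S : Finset ℕ,
      (∀ i ∈ B, g i ≤ i) →
      (∀ i ∈ B, θ * ((Icc (g i) i).card : ℝ) < ((S ∩ Icc (g i) i).card : ℝ)) →
      θ * B.card ≤ (S.card : ℝ) := by
  intro B
  induction B using Finset.strongInduction with
  | _ B ih =>
    intro S hf hcount
    rcases B.eq_empty_or_nonempty with rfl | hBne
    · simp
    set i := B.max' hBne with hi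
    have hiB : i ∈ B := B.max'_mem hBne
    set j := g i with hj
    have hij : j ≤ i := hf i hiB
    set B2 := B.filter (fun x => x < j) with hB2
    have hB2ss : B2 ⊂ B := by
      refine Finset.filter_ssubset.mpr ⟨i, hiB, by simpa using hij⟩
    set S2 := S.filter (fun x => x < j) with hS2
    have hrec : θ * B2.card ≤ (S2.card : ℝ) := by
      apply ih B2 hB2ss S2
      · intro x hx; exact hf x (Finset.mem_of_mem_filter _ hx)
      · intro x hx
        have hxB := Finset.mem_of_mem_filter _ hx
        have hxj : x < j := (Finset.mem_filter.mp hx).2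
        have heq : S2 ∩ Icc (g x) x = S ∩ Icc (g x) x := by
          ext y
          simp only [hS2, Finset.mem_inter, Finset.mem_filter, Finset.mem_Icc]
          constructor
          · rintro ⟨⟨hy, _⟩, h2⟩; exact ⟨hy, h2⟩
          · rintro ⟨hy, h2⟩; exact ⟨⟨hy, lt_of_le_of_lt h2.2 hxj⟩, h2⟩
        rw [heq]; exact hcount x hxB
    have hB1 : B.filter (fun x => ¬ x < j) ⊆ Icc j i := by
      intro x hx
      rw [Finset.mem_filter] at hx
      exact Finset.mem_Icc.mpr ⟨not_lt.mp hx.2, B.le_max' x hx.1⟩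
    have h1 : θ * ((B.filter fun x => ¬ x < j).card : ℝ) ≤
        ((S.filter fun x => ¬ x < j).card : ℝ) := by
      calc θ * ((B.filter fun x => ¬ x < j).card : ℝ)
          ≤ θ * ((Icc j i).card : ℝ) := by
            apply mul_le_mul_of_nonneg_left _ hθ.le
            exact_mod_cast Finset.card_le_card hB1
        _ ≤ ((S ∩ Icc j i).card : ℝ) := (hcount i hiB).le
        _ ≤ ((S.filter fun x => ¬ x < j).card : ℝ) := by
            apply Nat.cast_le.mpr
            apply Finset.card_le_card
            intro y hy
            rw [Finset.mem_inter, Finset.mem_Icc] at hy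
            exact Finset.mem_filter.mpr ⟨hy.1, not_lt.mpr hy.2.1⟩
    have hcB : (B2.card : ℝ) + ((B.filter fun x => ¬ x < j).card : ℝ) = B.card := by
      exact_mod_cast Finset.card_filter_add_card_filter_not (s := B) (p := fun x => x < j)
    have hcS : (S2.card : ℝ) + ((S.filter fun x => ¬ x < j).card : ℝ) = S.card := by
      exact_mod_cast Finset.card_filter_add_card_filter_not (s := S) (p := fun x => x < j)
    nlinarith [hrec, h1]

set_option maxHeartbeats 1000000

/-- **Locally good indices in a nearly sorted array** (EGS75): if at most `n'`
of the indices `{1,…,n}` are corrupted (lie in `S`), then at least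
`n − 2n'/θ` indices `i` are `θ`-locally good, i.e. for every `r ≥ 0` at most a
`θ`-fraction of the indices in `{i, …, min(i+r, n)}` lie in `S` and at most a
`θ`-fraction of the indices in `{max(i−r, 1), …, i}` lie in `S`. -/
theorem locally_good_indices (n : ℕ) (hn : 1 ≤ n)
    (θ : ℝ) (hθ0 : 0 < θ) (hθ1 : θ ≤ 1)
    (S : Finset ℕ) (hS : S ⊆ Finset.Icc 1 n)
    (n' : ℝ) (hn' : (S.card : ℝ) ≤ n') :
    (n : ℝ) - 2 * n' / θ ≤
      (({i | i ∈ Finset.Icc 1 n ∧ ∀ r : ℕ,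
          ((S ∩ Finset.Icc i (min (i + r) n)).card : ℝ) ≤
            θ * ((Finset.Icc i (min (i + r) n)).card : ℝ) ∧
          ((S ∩ Finset.Icc (max (i - r) 1) i).card : ℝ) ≤
            θ * ((Finset.Icc (max (i - r) 1) i).card : ℝ)}.ncard : ℝ)) := by
  classical
  set c1 : ℕ → ℕ → Prop := fun i r =>
    ((S ∩ Finset.Icc i (min (i + r) n)).card : ℝ) ≤
      θ * ((Finset.Icc i (min (i + r) n)).card : ℝ) with hc1
  set c2 : ℕ → ℕ → Prop := fun i r =>
    ((S ∩ Finset.Icc (max (i - r) 1) i).card : ℝ) ≤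
      θ * ((Finset.Icc (max (i - r) 1) i).card : ℝ) with hc2
  set P : ℕ → Prop := fun i => ∀ r : ℕ, c1 i r ∧ c2 i r with hP
  set Good := (Finset.Icc 1 n).filter P with hGood
  have hset : {i | i ∈ Finset.Icc 1 n ∧ ∀ r : ℕ,
          ((S ∩ Finset.Icc i (min (i + r) n)).card : ℝ) ≤
            θ * ((Finset.Icc i (min (i + r) n)).card : ℝ) ∧
          ((S ∩ Finset.Icc (max (i - r) 1) i).card : ℝ) ≤
            θ * ((Finset.Icc (max (i - r) 1) i).card : ℝ)} = ↑Good := by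
    ext x; simp [hGood, hP, hc1, hc2]
  rw [hset, Set.ncard_coe_finset]
  set Bf := (Finset.Icc 1 n).filter (fun i => ∃ r, ¬ c1 i r) with hBf
  set Bb := (Finset.Icc 1 n).filter (fun i => ∃ r, ¬ c2 i r) with hBb
  set f : ℕ → ℕ := fun i => if h : ∃ r, ¬ c1 i r then min (i + h.choose) n else i with hf
  set g : ℕ → ℕ := fun i => if h : ∃ r, ¬ c2 i r then max (i - h.choose) 1 else i with hg
  have hBfcard : θ * Bf.card ≤ (S.card : ℝ) := by
    apply cover_right θ hθ0 f Bf S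
    · intro i hi
      rw [hBf, Finset.mem_filter] at hi
      obtain ⟨hiI, h⟩ := hi
      rw [hf]; simp only [dif_pos h]
      exact le_min (Nat.le_add_right _ _) (Finset.mem_Icc.mp hiI).2
    · intro i hi
      rw [hBf, Finset.mem_filter] at hi
      obtain ⟨hiI, h⟩ := hi
      have hspec := h.choose_spec
      rw [hf]; simp only [dif_pos h]
      exact lt_of_not_ge (by simpa [hc1] using hspec)
  have hBbcard : θ * Bb.card ≤ (S.card : ℝ) := by
    apply cover_left θ hθ0 g Bb S
    · intro i hi
      rw [hBb, Finset.mem_filter] at hi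
      obtain ⟨hiI, h⟩ := hi
      rw [hg]; simp only [dif_pos h]
      exact max_le (Nat.sub_le _ _) (Finset.mem_Icc.mp hiI).1
    · intro i hi
      rw [hBb, Finset.mem_filter] at hi
      obtain ⟨hiI, h⟩ := hi
      have hspec := h.choose_spec
      rw [hg]; simp only [dif_pos h]
      exact lt_of_not_ge (by simpa [hc2] using hspec)
  have hcover : Finset.Icc 1 n ⊆ Good ∪ (Bf ∪ Bb) := by
    intro i hi
    by_cases hp : P i
    · exact Finset.mem_union_left _ (Finset.mem_filter.mpr ⟨hi, hp⟩)
    · rw [hP] at hp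
      obtain ⟨r, hr⟩ := not_forall.mp hp
      rw [not_and_or] at hr
      rcases hr with h | h
      · exact Finset.mem_union_right _ (Finset.mem_union_left _
          (Finset.mem_filter.mpr ⟨hi, ⟨r, h⟩⟩))
      · exact Finset.mem_union_right _ (Finset.mem_union_right _
          (Finset.mem_filter.mpr ⟨hi, ⟨r, h⟩⟩))
  have hcard : (n : ℝ) ≤ Good.card + (Bf.card + Bb.card) := by
    have h1 : (Finset.Icc 1 n).card ≤ Good.card + (Bf.card + Bb.card) := by
      calc (Finset.Icc 1 n).card ≤ (Good ∪ (Bf ∪ Bb)).card := Finset.card_le_card hcover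
        _ ≤ Good.card + (Bf ∪ Bb).card := Finset.card_union_le _ _
        _ ≤ Good.card + (Bf.card + Bb.card) := by
            exact Nat.add_le_add_left (Finset.card_union_le _ _) _
    have h2 : (Finset.Icc 1 n).card = n := by rw [Nat.card_Icc]; omega
    rw [h2] at h1
    exact_mod_cast h1
  have hsum : (Bf.card : ℝ) + Bb.card ≤ 2 * n' / θ := by
    rw [le_div_iff₀ hθ0]
    nlinarith
  linarith
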